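/- In the 1-challenger, n-voter TCR voting game, suppose for every voter i that T − T_C − t_i ≥ T·Q and t_i < T·Q (so no single voter is pivotal from a unanimous profile), and T − T_C ≥ T·Q. Then the set of pure-strategy Nash equilibria is exactly the two unanimous profiles: the profile in which every voter votes Accept and the profile in which every voter votes Reject. -/

import Mathlib

open Finset

/-- Total tokens voting Accept under profile `σ` (`true` = Accept). -/
noncomputable def TA {n : ℕ} (tok : Fin n → ℝ) (σ : Fin n → Bool) : ℝ :=
  ∑ i, if σ i then tok i else 0

/-- Payoff to voter `i` in the 1-challenger, `n`-voter TCR voting game under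
profile `σ`.  The candidate is accepted iff `TA tok σ ≥ T * Q`. -/
noncomputable def payoffN {n : ℕ} (tok : Fin n → ℝ)
    (TC T D d s Q V0 Vr : ℝ) (σ : Fin n → Bool) (i : Fin n) : ℝ :=
  if TA tok σ ≥ T * Q then
    if σ i then
      (tok i + (D * (1 - d) + (T - TA tok σ - TC) * s) * tok i / TA tok σ) * Vr
    else tok i * (1 - s) * Vr
  else
    if σ i then tok i * (1 - s) * V0
    else
      (tok i + (D * (1 - d) + TA tok σ * s) * tok i / (T - TA tok σ - TC)) * V0

/-- `σ` is a Nash equilibrium iff no voter can strictly increase her payoff by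
unilaterally changing her vote. -/
def NashEqN {n : ℕ} (tok : Fin n → ℝ) (TC T D d s Q V0 Vr : ℝ)
    (σ : Fin n → Bool) : Prop :=
  ∀ i : Fin n,
    payoffN tok TC T D d s Q V0 Vr σ i ≥
      payoffN tok TC T D d s Q V0 Vr (Function.update σ i (!σ i)) i

lemma TA_update {n : ℕ} (tok : Fin n → ℝ) (σ : Fin n → Bool) (i : Fin n) (b : Bool) :
    TA tok (Function.update σ i b) =
      TA tok σ - (if σ i then tok i else 0) + (if b then tok i else 0) := by
  unfold TA
  have h1 : ∑ k, (if Function.update σ i b k then tok k else 0)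
      = (∑ k ∈ Finset.univ.erase i, (if σ k then tok k else 0)) + (if b then tok i else 0) := by
    rw [← Finset.sum_erase_add _ _ (Finset.mem_univ i)]
    congr 1
    · apply Finset.sum_congr rfl; intro k hk
      rw [Function.update_of_ne (Finset.ne_of_mem_erase hk)]
    · rw [Function.update_self]
  have h2 : ∑ k, (if σ k then tok k else 0)
      = (∑ k ∈ Finset.univ.erase i, (if σ k then tok k else 0)) + (if σ i then tok i else 0) := by
    rw [← Finset.sum_erase_add _ _ (Finset.mem_univ i)]
  rw [h1, h2]; ring

lemma TA_nonneg {n : ℕ} (tok : Fin n → ℝ) (htok : ∀ i, 0 ≤ tok i) (σ : Fin n → Bool) :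
    0 ≤ TA tok σ :=
  Finset.sum_nonneg fun k _ => by split <;> [exact htok k; exact le_rfl]

lemma TA_le_sum {n : ℕ} (tok : Fin n → ℝ) (htok : ∀ i, 0 ≤ tok i) (σ : Fin n → Bool) :
    TA tok σ ≤ ∑ i, tok i :=
  Finset.sum_le_sum fun k _ => by split <;> [exact le_rfl; exact htok k]

lemma single_le_TA {n : ℕ} (tok : Fin n → ℝ) (htok : ∀ i, 0 ≤ tok i) (σ : Fin n → Bool)
    (i : Fin n) (h : σ i = true) : tok i ≤ TA tok σ := by
  have := Finset.single_le_sum (f := fun k => if σ k then tok k else 0)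
    (fun k _ => by split <;> [exact htok k; exact le_rfl]) (Finset.mem_univ i)
  simp only [h, if_true] at this
  exact this

lemma TA_le_sub {n : ℕ} (tok : Fin n → ℝ) (htok : ∀ i, 0 ≤ tok i) (σ : Fin n → Bool)
    (i : Fin n) (h : σ i = false) : TA tok σ ≤ (∑ k, tok k) - tok i := by
  unfold TA
  rw [← Finset.sum_erase_add _ _ (Finset.mem_univ i), h, if_neg (by simp),
      ← Finset.sum_erase_add _ tok (Finset.mem_univ i)]
  simp only [add_zero, add_sub_cancel_right]
  exact Finset.sum_le_sum fun k _ => by split <;> [exact le_rfl; exact htok k]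

lemma key_ineq (t F s V : ℝ) (ht : 0 < t) (hF : 0 ≤ F) (hs : 0 < s) (hV : 0 ≤ V) :
    (t + F) * V ≥ t * (1 - s) * V := by
  nlinarith [mul_nonneg (mul_pos ht hs).le hV, mul_nonneg hF hV]


/-- Under the no-pivot conditions (`T − T_C − t_i ≥ T·Q` and `t_i < T·Q` for
every voter `i`) and `T − T_C ≥ T·Q`, the set of pure-strategy Nash equilibria
is exactly the two unanimous profiles: all voters voting Accept and all voters
voting Reject. -/
theorem stmt6 {n : ℕ} (hn : 2 ≤ n) (tok : Fin n → ℝ) (htok : ∀ i, 0 < tok i)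
    (TC T D d s Q V0 Vr : ℝ) (hTC : 0 < TC) (hT : T = TC + ∑ i, tok i)
    (hD : 0 < D) (hd0 : 0 ≤ d) (hd1 : d < 1) (hs0 : 0 < s) (hs1 : s < 1)
    (hQ0 : 0 < Q) (hQ1 : Q ≤ 1) (hV0 : 0 < V0) (hVr : 0 < Vr)
    (hpiv : ∀ i, T - TC - tok i ≥ T * Q ∧ tok i < T * Q)
    (hacc : T - TC ≥ T * Q) :
    ∀ σ : Fin n → Bool, NashEqN tok TC T D d s Q V0 Vr σ ↔
      (σ = fun _ => true) ∨ (σ = fun _ => false) := by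
  have htok' : ∀ i, (0:ℝ) ≤ tok i := fun i => (htok i).le
  have hSpos : 0 < ∑ i, tok i :=
    Finset.sum_pos (fun i _ => htok i) ⟨⟨0, by omega⟩, Finset.mem_univ _⟩
  have hTpos : 0 < T := by rw [hT]; linarith
  have hTQ : 0 < T * Q := mul_pos hTpos hQ0
  have hDd : 0 < D * (1 - d) := mul_pos hD (by linarith)
  intro σ
  constructor
  · intro hNE
    by_contra hcon
    push_neg at hcon
    obtain ⟨hne1, hne2⟩ := hcon
    have hj : ∃ j, σ j = false := by
      by_contra h; push_neg at h; exact hne1 (funext fun k => by simpa using h k)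
    have hi : ∃ i, σ i = true := by
      by_contra h; push_neg at h; exact hne2 (funext fun k => by simpa using h k)
    obtain ⟨j, hjf⟩ := hj; obtain ⟨i, hit⟩ := hi
    by_cases hA : TA tok σ ≥ T * Q
    · -- accepted; flipping j to Accept strictly improves
      have hNEj := hNE j
      set σ' := Function.update σ j (!σ j) with hσ'
      have hσ'j : σ' j = true := by
        rw [hσ', Function.update_self, hjf]; rfl
      have hTA' : TA tok σ' = TA tok σ + tok j := by
        rw [hσ', TA_update, hjf]; simp
      have hTA'le : TA tok σ' ≤ ∑ k, tok k := TA_le_sum tok htok' σ'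
      have hTA'pos : 0 < TA tok σ' :=
        lt_of_lt_of_le (htok j) (single_le_TA tok htok' σ' j hσ'j)
      have hA' : TA tok σ' ≥ T * Q := by rw [hTA']; linarith [htok j]
      have hp1 : payoffN tok TC T D d s Q V0 Vr σ j = tok j * (1 - s) * Vr := by
        unfold payoffN; rw [if_pos hA, hjf]; simp
      have hp2 : payoffN tok TC T D d s Q V0 Vr σ' j
          = (tok j + (D * (1 - d) + (T - TA tok σ' - TC) * s) * tok j / TA tok σ') * Vr := by
        unfold payoffN; rw [if_pos hA', hσ'j]; simp
      rw [hp1, hp2] at hNEj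
      have hnn : 0 ≤ T - TA tok σ' - TC := by rw [hT]; linarith
      have hfrac : 0 < (D * (1 - d) + (T - TA tok σ' - TC) * s) * tok j / TA tok σ' := by
        apply div_pos _ hTA'pos
        have := mul_nonneg hnn hs0.le
        nlinarith [htok j]
      nlinarith [htok j, mul_pos (mul_pos (htok j) hs0) hVr, mul_pos hfrac hVr]
    · -- rejected; flipping i to Reject strictly improves
      have hNEi := hNE i
      set σ' := Function.update σ i (!σ i) with hσ'
      have hσ'i : σ' i = false := by
        rw [hσ', Function.update_self, hit]; rfl
      have hTA' : TA tok σ' = TA tok σ - tok i := by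
        rw [hσ', TA_update, hit]; simp
      have hTA'nn : 0 ≤ TA tok σ' := TA_nonneg tok htok' σ'
      have hTA'le : TA tok σ' ≤ (∑ k, tok k) - tok i := TA_le_sub tok htok' σ' i hσ'i
      have hA' : ¬ TA tok σ' ≥ T * Q := by
        push_neg at hA ⊢; rw [hTA']; linarith [htok i]
      have hden : 0 < T - TA tok σ' - TC := by rw [hT]; linarith [htok i]
      have hp1 : payoffN tok TC T D d s Q V0 Vr σ i = tok i * (1 - s) * V0 := by
        unfold payoffN; rw [if_neg hA, hit]; simp
      have hp2 : payoffN tok TC T D d s Q V0 Vr σ' i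
          = (tok i + (D * (1 - d) + TA tok σ' * s) * tok i / (T - TA tok σ' - TC)) * V0 := by
        unfold payoffN; rw [if_neg hA', hσ'i]; simp
      rw [hp1, hp2] at hNEi
      have hfrac : 0 < (D * (1 - d) + TA tok σ' * s) * tok i / (T - TA tok σ' - TC) := by
        apply div_pos _ hden
        have := mul_nonneg hTA'nn hs0.le
        nlinarith [htok i]
      nlinarith [htok i, mul_pos (mul_pos (htok i) hs0) hV0, mul_pos hfrac hV0]
  · rintro (rfl | rfl) <;> intro i
    · -- all Accept
      have hTAt : TA tok (fun _ => true) = ∑ k, tok k := by simp [TA]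
      have hA : TA tok (fun _ => true) ≥ T * Q := by rw [hTAt]; linarith [hacc, hT]
      set σ' := Function.update (fun _ : Fin n => true) i (!true) with hσ'
      have hσ'i : σ' i = false := by rw [hσ', Function.update_self]; rfl
      have hTA' : TA tok σ' = (∑ k, tok k) - tok i := by
        rw [hσ', TA_update, hTAt]; simp
      have hA' : TA tok σ' ≥ T * Q := by
        rw [hTA']; have := (hpiv i).1; linarith [hT]
      have hp1 : payoffN tok TC T D d s Q V0 Vr (fun _ => true) i
          = (tok i + (D * (1 - d) + (T - TA tok (fun _ => true) - TC) * s) * tok i /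
              TA tok (fun _ => true)) * Vr := by
        unfold payoffN; rw [if_pos hA]; simp
      have hp2 : payoffN tok TC T D d s Q V0 Vr σ' i = tok i * (1 - s) * Vr := by
        unfold payoffN; rw [if_pos hA', hσ'i]; simp
      rw [hp1]
      rw [hp2]
      have hz : T - TA tok (fun _ => true) - TC = 0 := by rw [hTAt, hT]; ring
      rw [hz]
      generalize hAgen : TA tok (fun _ : Fin n => true) = A at hTAt ⊢
      have hApos : 0 < A := by rw [hTAt]; exact hSpos
      have hb : (0:ℝ) ≤ D * (1 - d) + 0 * s := by rw [zero_mul, add_zero]; exact hDd.le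
      have hfrac : 0 ≤ (D * (1 - d) + 0 * s) * tok i / A :=
        div_nonneg (mul_nonneg hb (htok' i)) hApos.le
      exact key_ineq _ _ _ _ (htok i) hfrac hs0 hVr.le
    · -- all Reject
      have hTAf : TA tok (fun _ => false) = 0 := by simp [TA]
      have hA : ¬ TA tok (fun _ => false) ≥ T * Q := by rw [hTAf]; push_neg; exact hTQ
      set σ' := Function.update (fun _ : Fin n => false) i (!false) with hσ'
      have hσ'i : σ' i = true := by rw [hσ', Function.update_self]; rfl
      have hTA' : TA tok σ' = tok i := by rw [hσ', TA_update, hTAf]; simp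
      have hA' : ¬ TA tok σ' ≥ T * Q := by rw [hTA']; push_neg; exact (hpiv i).2
      have hp1 : payoffN tok TC T D d s Q V0 Vr (fun _ => false) i
          = (tok i + (D * (1 - d) + TA tok (fun _ => false) * s) * tok i /
              (T - TA tok (fun _ => false) - TC)) * V0 := by
        unfold payoffN; rw [if_neg hA]; simp
      have hp2 : payoffN tok TC T D d s Q V0 Vr σ' i = tok i * (1 - s) * V0 := by
        unfold payoffN; rw [if_neg hA', hσ'i]; simp
      rw [hp1]
      rw [hp2]
      rw [hTAf]
      have hden : 0 < T - 0 - TC := by rw [hT]; linarith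
      have hb : (0:ℝ) ≤ D * (1 - d) + 0 * s := by rw [zero_mul, add_zero]; exact hDd.le
      have hfrac : 0 ≤ (D * (1 - d) + 0 * s) * tok i / (T - 0 - TC) :=
        div_nonneg (mul_nonneg hb (htok' i)) hden.le
      exact key_ineq _ _ _ _ (htok i) hfrac hs0 hV0.le
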